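/- Let S = (⟨N, L⟩, loc, Supp) be a structuring of (Σ, Ax, Lem) and suppose K →*σ N holds in ⟨N, L⟩ for nodes K, N. Then the transitive enrichment S' = (⟨N, L ∪ {K →σ N}⟩, loc, Supp) is again a structuring of (Σ, Ax, Lem). -/

import Mathlib

open Classical

/-! # Development graphs and structurings

Entities come from a fixed type `E`, partitioned into signature symbols, axioms and
lemmas by a kind function `kind : E → EKind`.  A development graph is a finite acyclic
directed graph whose nodes are triples of sets of entities (local signature, local
axioms, local lemmas) and whose links are global definition links labelled with
signature morphisms `σ : E → E`. -/

/-- The three kinds of entities: signature symbols, axioms and lemmas. -/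
inductive EKind : Type
  | sig
  | ax
  | lem
deriving DecidableEq

/-- A development graph node `N = (sig^N, ax^N, lem^N)`. -/
structure DGNode (E : Type*) where
  sig : Set E
  ax : Set E
  lem : Set E

/-- The local domain `dom^N := sig^N ∪ ax^N ∪ lem^N`. -/
def DGNode.localDom {E : Type*} (N : DGNode E) : Set E := N.sig ∪ N.ax ∪ N.lem

/-- A global definition link `src →mor tgt`. -/
structure DGLink (E : Type*) where
  src : DGNode E
  mor : E → E
  tgt : DGNode E

/-- A development graph: a finite acyclic directed graph of nodes and links. -/
structure DevGraph (E : Type*) where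
  nodes : Set (DGNode E)
  links : Set (DGLink E)
  src_mem : ∀ l ∈ links, l.src ∈ nodes
  tgt_mem : ∀ l ∈ links, l.tgt ∈ nodes
  finite_nodes : nodes.Finite
  finite_links : links.Finite
  acyclic : ∀ N, ¬ Relation.TransGen (fun M K => ∃ l ∈ links, l.src = M ∧ l.tgt = K) N N

namespace DevGraph

variable {E : Type*}

/-- `e ∈ Dom_D(N)`: the domain of a node is the union of its local domain with the
images `σ(Dom_D(M))` over all incoming links `M →σ N`. -/
inductive InDom (D : DevGraph E) : DGNode E → E → Prop
  | loc {N : DGNode E} {e : E} : N ∈ D.nodes → e ∈ N.localDom → InDom D N e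
  | link {l : DGLink E} {e : E} : l ∈ D.links → InDom D l.src e → InDom D l.tgt (l.mor e)

/-- `Dom_D(N)`. -/
def Dom (D : DevGraph E) (N : DGNode E) : Set E := {e | D.InDom N e}

/-- `Dom_D`: the union of `Dom_D(N)` over all nodes. -/
def DomAll (D : DevGraph E) : Set E := ⋃ N ∈ D.nodes, D.Dom N

/-- Root nodes: nodes without outgoing links. -/
def IsRoot (D : DevGraph E) (N : DGNode E) : Prop :=
  N ∈ D.nodes ∧ ∀ l ∈ D.links, l.src ≠ N

/-- `Dom_{Roots(D)}`. -/
def DomRoots (D : DevGraph E) : Set E := {e | ∃ N, D.IsRoot N ∧ e ∈ D.Dom N}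

/-- Global reachability `M →*σ N`: either `M = N` and `σ = id`, or there is a link
`M →σ' K` and `K →*σ'' N` with `σ = σ'' ∘ σ'`. -/
inductive Reaches (D : DevGraph E) : DGNode E → (E → E) → DGNode E → Prop
  | refl (N : DGNode E) : Reaches D N id N
  | step {l : DGLink E} {σ'' : E → E} {N : DGNode E} :
      l ∈ D.links → Reaches D l.tgt σ'' N → Reaches D l.src (σ'' ∘ l.mor) N

/-- `e` is provided in `N` iff `e ∈ Dom_D(N)` and `e ∉ Dom_D(M)` for every link `M →σ N`. -/
def ProvidedIn (D : DevGraph E) (N : DGNode E) (e : E) : Prop :=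
  e ∈ D.Dom N ∧ ∀ l ∈ D.links, l.tgt = N → e ∉ D.Dom l.src

/-- `e` is locally provided in `N` iff it is provided in `N` and `e ∈ dom^N`. -/
def LocallyProvidedIn (D : DevGraph E) (N : DGNode E) (e : E) : Prop :=
  D.ProvidedIn N e ∧ e ∈ N.localDom

/-- `e` is provided by a link `l : M →σ N` iff `e` is provided but not locally provided
in `N` and `σ(e') = e` for some `e' ∈ Dom_D(M)`. -/
def ProvidedByLink (D : DevGraph E) (l : DGLink E) (e : E) : Prop :=
  l ∈ D.links ∧ D.ProvidedIn l.tgt e ∧ ¬ D.LocallyProvidedIn l.tgt e ∧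
    ∃ e' ∈ D.Dom l.src, l.mor e' = e

/-- `e` is exclusively provided by `l` iff no other link provides `e`. -/
def ExclusivelyProvidedBy (D : DevGraph E) (l : DGLink E) (e : E) : Prop :=
  D.ProvidedByLink l e ∧ ∀ l' ∈ D.links, D.ProvidedByLink l' e → l' = l

/-- A location mapping for `D`: surjective, mapping local entities to their node,
and mapping each entity of `Dom_D` to the unique node providing it. -/
structure IsLocationMapping (D : DevGraph E) (loc : E → DGNode E) : Prop where
  surj : ∀ N ∈ D.nodes, ∃ e ∈ D.DomAll, loc e = N
  local_loc : ∀ N ∈ D.nodes, ∀ e ∈ N.localDom, loc e = N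
  provided : ∀ e ∈ D.DomAll, D.ProvidedIn (loc e) e
  unique : ∀ e ∈ D.DomAll, ∀ N, D.ProvidedIn N e → N = loc e

end DevGraph

/-- The relation `⊏` induced by a support mapping `Supp` on lemmas `Lem`:
`Φ ⊏ φ` iff `Φ ∈ Supp φ`, or `Φ ∈ Supp ψ` and `ψ ⊏ φ` for some lemma `ψ`. -/
inductive SuppBelow {E : Type*} (Supp : E → Set E) (Lem : Set E) : E → E → Prop
  | base {Φ φ : E} : φ ∈ Lem → Φ ∈ Supp φ → SuppBelow Supp Lem Φ φ
  | trans {Φ ψ φ : E} : ψ ∈ Lem → Φ ∈ Supp ψ → SuppBelow Supp Lem ψ φ →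
      SuppBelow Supp Lem Φ φ

/-- `Supp` is a support mapping for axioms `Ax` and lemmas `Lem`: each lemma is
supported by axioms and lemmas, and the induced relation `⊏` is well-founded. -/
structure IsSupportMapping {E : Type*} (Supp : E → Set E) (Ax Lem : Set E) : Prop where
  subset : ∀ φ ∈ Lem, Supp φ ⊆ Ax ∪ Lem
  wf : WellFounded (SuppBelow Supp Lem)

section

variable {E : Type*} (kind : E → EKind)

/-- The global axioms of `N` in `D`. -/
def DevGraph.axiomsOf (D : DevGraph E) (N : DGNode E) : Set E :=
  {e | e ∈ D.Dom N ∧ kind e = EKind.ax}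

/-- The global lemmas of `N` in `D`. -/
def DevGraph.lemmasOf (D : DevGraph E) (N : DGNode E) : Set E :=
  {e | e ∈ D.Dom N ∧ kind e = EKind.lem}

/-- The lemmas occurring in `D`. -/
def DevGraph.lemmasAll (D : DevGraph E) : Set E :=
  {e | e ∈ D.DomAll ∧ kind e = EKind.lem}

/-- `Supp` is a support mapping for the development graph `D`: for every node it is a
support mapping for the global axioms and lemmas of that node. -/
def IsSupportMappingFor (Supp : E → Set E) (D : DevGraph E) : Prop :=
  ∀ N ∈ D.nodes, IsSupportMapping Supp (D.axiomsOf kind N) (D.lemmasOf kind N)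

/-- `(D, loc, Supp)` is a structuring of `(Sig, Ax, Lem)`. -/
structure IsStructuring (D : DevGraph E) (loc : E → DGNode E) (Supp : E → Set E)
    (Sig Ax Lem : Set E) : Prop where
  supp_for : IsSupportMappingFor kind Supp D
  loc_map : D.IsLocationMapping loc
  roots_sig : {e | e ∈ D.DomRoots ∧ kind e = EKind.sig} = Sig
  roots_ax : {e | e ∈ D.DomRoots ∧ kind e = EKind.ax} = Ax
  roots_lem : Lem ⊆ {e | e ∈ D.DomRoots ∧ kind e = EKind.lem}
  supp_reach : ∀ φ ∈ D.lemmasAll kind, ∀ ψ ∈ Supp φ,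
    ∃ σ : E → E, D.Reaches (loc ψ) σ (loc φ) ∧ σ ψ = ψ

end

/-- `P = {N_1, …, N_k}`, `k > 1`, is a partitioning of `N`: the local signatures,
axioms and lemmas of the (distinct) `N_i` partition those of `N` as disjoint unions,
and each `N_i` has a nonempty local domain. -/
structure IsPartitioning {E : Type*} (N : DGNode E) {k : ℕ} (Ns : Fin k → DGNode E) :
    Prop where
  one_lt : 1 < k
  inj : Function.Injective Ns
  sig_eq : N.sig = ⋃ i, (Ns i).sig
  ax_eq : N.ax = ⋃ i, (Ns i).ax
  lem_eq : N.lem = ⋃ i, (Ns i).lem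
  sig_disj : ∀ i j, i ≠ j → Disjoint (Ns i).sig (Ns j).sig
  ax_disj : ∀ i j, i ≠ j → Disjoint (Ns i).ax (Ns j).ax
  lem_disj : ∀ i j, i ≠ j → Disjoint (Ns i).lem (Ns j).lem
  nonempty : ∀ i, (Ns i).localDom.Nonempty

/-- `Ni` (a part of a partitioning of `N`) is lemma independent:
`Supp(ψ) ∩ (ax^N ∪ lem^N) ⊆ ax^{Ni} ∪ lem^{Ni}` for every `ψ ∈ lem^{Ni}`. -/
def LemmaIndependent {E : Type*} (Supp : E → Set E) (N Ni : DGNode E) : Prop :=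
  ∀ ψ ∈ Ni.lem, Supp ψ ∩ (N.ax ∪ N.lem) ⊆ Ni.ax ∪ Ni.lem

/-- The restriction `σ|S` of a signature morphism to a set `S` (identity outside `S`). -/
noncomputable def restrictMor {E : Type*} (σ : E → E) (S : Set E) : E → E :=
  fun e => if e ∈ S then σ e else e

/-- `(D', loc')` is the horizontal split of `(D, loc)` with respect to the node `N` and
the partitioning `N_1, …, N_k`: `N` is replaced by `N_1, …, N_k`, incoming links
`M →θ N` are replaced by `M →θ N_i` for all `i`, outgoing links `N →τ M` by
`N_i →τ|Dom_{D'}(N_i) M` for all `i`, all other links are kept, and `loc'(e) = N_i`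
if `e ∈ dom^{N_i}` and `loc'(e) = loc(e)` otherwise. -/
structure IsHorizontalSplit {E : Type*} (D D' : DevGraph E) (N : DGNode E) {k : ℕ}
    (Ns : Fin k → DGNode E) (loc loc' : E → DGNode E) : Prop where
  mem : N ∈ D.nodes
  fresh : ∀ i, Ns i ∉ D.nodes \ {N}
  nodes' : D'.nodes = Set.range Ns ∪ (D.nodes \ {N})
  links' : D'.links =
    {l | (l ∈ D.links ∧ l.src ≠ N ∧ l.tgt ≠ N)
      ∨ (∃ l0 ∈ D.links, l0.tgt = N ∧ ∃ i, l = ⟨l0.src, l0.mor, Ns i⟩)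
      ∨ (∃ l0 ∈ D.links, l0.src = N ∧
          ∃ i, l = ⟨Ns i, restrictMor l0.mor (D'.Dom (Ns i)), l0.tgt⟩)}
  loc'_in : ∀ i, ∀ e ∈ (Ns i).localDom, loc' e = Ns i
  loc'_out : ∀ e, (∀ i, e ∉ (Ns i).localDom) → loc' e = loc e

/-- `(D', loc')` is the vertical split of `(D, loc)` with respect to the node `N` and
the partitioning `{N_1, N_2}`: `N` is replaced by `N_1` and `N_2` joined by the link
`N_1 →id N_2`, incoming links `M →σ N` are replaced by `M →σ N_1`, outgoing links
`N →σ M` by `N_2 →σ M`, all other links are kept, and `loc'(e) = N_2` if `loc(e) = N`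
and `e ∈ Dom_{D'}(N_2)`, `loc'(e) = N_1` if `loc(e) = N` and `e ∉ Dom_{D'}(N_2)`, and
`loc'(e) = loc(e)` otherwise. -/
structure IsVerticalSplit {E : Type*} (D D' : DevGraph E) (N N1 N2 : DGNode E)
    (loc loc' : E → DGNode E) : Prop where
  mem : N ∈ D.nodes
  fresh1 : N1 ∉ D.nodes \ {N}
  fresh2 : N2 ∉ D.nodes \ {N}
  nodes' : D'.nodes = {N1, N2} ∪ (D.nodes \ {N})
  links' : D'.links =
    {l | (l ∈ D.links ∧ l.src ≠ N ∧ l.tgt ≠ N)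
      ∨ l = ⟨N1, id, N2⟩
      ∨ (∃ l0 ∈ D.links, l0.tgt = N ∧ l = ⟨l0.src, l0.mor, N1⟩)
      ∨ (∃ l0 ∈ D.links, l0.src = N ∧ l = ⟨N2, l0.mor, l0.tgt⟩)}
  loc'_N2 : ∀ e, loc e = N → e ∈ D'.Dom N2 → loc' e = N2
  loc'_N1 : ∀ e, loc e = N → e ∉ D'.Dom N2 → loc' e = N1
  loc'_other : ∀ e, loc e ≠ N → loc' e = loc e

/-- `(D', loc', Supp ∪ SuppN)` is the factorization of `(D, loc, Supp)` with respect to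
the nodes `M_1, …, M_p` (imported via links `K_i →σ_{i,j} M_j` from `K_1, …, K_n`),
the fresh sets `sigN, axN, lemN`, the morphisms `θ_j` and `σ_i`, and the support
mapping `SuppN`; it includes all side conditions of the factorization rule. -/
structure IsFactorization {E : Type*} (kind : E → EKind) (D D' : DevGraph E)
    (loc loc' : E → DGNode E) (Supp SuppN : E → Set E)
    {n p : ℕ} (Ks : Fin n → DGNode E) (Ms : Fin p → DGNode E)
    (σij : Fin n → Fin p → E → E)
    (sigN axN lemN : Set E) (θ : Fin p → E → E) (σ : Fin n → E → E)
    (N : DGNode E) (Nj : Fin p → DGNode E) : Prop where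
  one_lt : 1 < p
  Ks_mem : ∀ i, Ks i ∈ D.nodes
  Ms_mem : ∀ j, Ms j ∈ D.nodes
  Ms_inj : Function.Injective Ms
  Ms_nonempty : ∀ j, ((Ms j).sig ∪ (Ms j).ax).Nonempty
  links_ij : ∀ i j, (⟨Ks i, σij i j, Ms j⟩ : DGLink E) ∈ D.links
  fresh : (sigN ∪ axN ∪ lemN) ∩ D.DomAll = ∅
  kind_sig : ∀ e ∈ sigN, kind e = EKind.sig
  kind_ax : ∀ e ∈ axN, kind e = EKind.ax
  kind_lem : ∀ e ∈ lemN, kind e = EKind.lem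
  mor_compat : ∀ i j, ∀ e ∈ D.Dom (Ks i), θ j (σ i e) = σij i j e
  mor_fresh : ∀ i j, ∀ e ∈ D.Dom (Ks i), σij i j e = e ∨ σij i j e ∉ D.DomAll
  sig_sub : ∀ j, (Ms j).sig ⊆ θ j '' sigN ∧ θ j '' sigN ⊆ D.Dom (Ms j)
  ax_sub : ∀ j, (Ms j).ax ⊆ θ j '' axN ∧ θ j '' axN ⊆ D.Dom (Ms j)
  lem_wit : ∀ e ∈ lemN, ∃ l, θ l e ∈ (Ms l).lem
  lem_inj : ∀ e ∈ lemN, ∀ i j, θ i e = θ j e → i = j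
  lem_loc : ∀ e ∈ lemN, ∀ j, θ j e ∈ D.DomAll → loc (θ j e) = Ms j
  suppN : IsSupportMapping SuppN (axN ∪ ⋃ i, σ i '' D.Dom (Ks i)) lemN
  N_def : N = ⟨sigN, axN, lemN⟩
  Nj_def : ∀ j, Nj j = ⟨∅, ∅, (Ms j).lem \ θ j '' lemN⟩
  nodes' : D'.nodes = {N} ∪ Set.range Nj ∪ (D.nodes \ Set.range Ms)
  links' : D'.links =
    {l | (l ∈ D.links ∧ l.src ∉ Set.range Ms ∧ l.tgt ∉ Set.range Ms)
      ∨ (∃ i, l = ⟨Ks i, σ i, N⟩)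
      ∨ (∃ j, l = ⟨N, θ j, Nj j⟩)
      ∨ (∃ l0 ∈ D.links, ∃ j, l0.tgt = Ms j ∧
          (∀ i, l0.src ≠ Ks i ∨ l0.mor ≠ σij i j) ∧ l = ⟨l0.src, l0.mor, Nj j⟩)
      ∨ (∃ l0 ∈ D.links, ∃ j, l0.src = Ms j ∧ l = ⟨Nj j, l0.mor, l0.tgt⟩)}
  loc'_N : ∀ x, x ∈ D'.Dom N → (∀ i, x ∉ D'.Dom (Ks i)) → loc' x = N
  loc'_Nj : ∀ x j, ¬ (x ∈ D'.Dom N ∧ ∀ i, x ∉ D'.Dom (Ks i)) →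
      x ∈ D'.Dom (Nj j) → (∀ l ∈ D'.links, l.tgt = Nj j → x ∉ D'.Dom l.src) →
      loc' x = Nj j
  loc'_other : ∀ x, ¬ (x ∈ D'.Dom N ∧ ∀ i, x ∉ D'.Dom (Ks i)) →
      (∀ j, ¬ (x ∈ D'.Dom (Nj j) ∧ ∀ l ∈ D'.links, l.tgt = Nj j → x ∉ D'.Dom l.src)) →
      loc' x = loc x

/-- The link `l` is removable from the structuring `(D, loc, Supp)`, and
`D' = ⟨N, L \ {l}⟩` is the corresponding reduction. -/
structure IsRemovableLink {E : Type*} (kind : E → EKind) (D D' : DevGraph E)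
    (loc : E → DGNode E) (Supp : E → Set E) (l : DGLink E) : Prop where
  mem : l ∈ D.links
  nodes' : D'.nodes = D.nodes
  links' : D'.links = D.links \ {l}
  cond1 : ∀ l' ∈ D.links, ∀ e ∈ D.Dom l'.src, D.ExclusivelyProvidedBy l' (l'.mor e) →
      l'.mor e ∈ D'.Dom l'.tgt ∧ l ≠ l'
  cond2 : ∀ e ∈ D.DomAll, ∀ M, D.IsRoot M → ∀ σ : E → E, D.Reaches (loc e) σ M →
      ∃ M', D'.IsRoot M' ∧ D'.Reaches (loc e) σ M'
  cond3_supp : ∀ φ ∈ D.lemmasAll kind, Supp φ ⊆ D'.Dom (loc φ)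
  cond3_sig : ∀ N' ∈ D.nodes, N'.sig ⊆ D'.Dom N'

section Aux

variable {E : Type*}

/-- The direct predecessor relation of a development graph. -/
def linkRel (D : DevGraph E) (M' M : DGNode E) : Prop :=
  ∃ l ∈ D.links, l.src = M' ∧ l.tgt = M

lemma inDom_mem {D : DevGraph E} {M : DGNode E} {e : E} (h : D.InDom M e) :
    M ∈ D.nodes := by
  induction h with
  | loc hN _ => exact hN
  | link hl _ _ => exact D.tgt_mem _ hl

lemma reach_dom {D : DevGraph E} {M N : DGNode E} {σ : E → E}
    (h : D.Reaches M σ N) : ∀ e, D.InDom M e → D.InDom N (σ e) := by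
  induction h with
  | refl => exact fun e he => he
  | step hl _ ih => exact fun e he => ih _ (DevGraph.InDom.link hl he)

lemma reaches_trans {D : DevGraph E} {A B C : DGNode E} {σ1 σ2 : E → E}
    (h1 : D.Reaches A σ1 B) (h2 : D.Reaches B σ2 C) : D.Reaches A (σ2 ∘ σ1) C := by
  induction h1 with
  | refl => simpa using h2
  | step hl _ ih =>
    have := DevGraph.Reaches.step hl (ih h2)
    simpa [Function.comp_assoc] using this

lemma reaches_transGen {D : DevGraph E} {K N : DGNode E} {σ : E → E}
    (h : D.Reaches K σ N) : K = N ∨ Relation.TransGen (linkRel D) K N := by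
  induction h with
  | refl => exact Or.inl rfl
  | @step l σ'' N hl _ ih =>
    right
    have hbase : linkRel D l.src l.tgt := ⟨l, hl, rfl, rfl⟩
    rcases ih with rfl | htg
    · exact Relation.TransGen.single hbase
    · exact Relation.TransGen.head hbase htg

lemma exists_provider {D : DevGraph E} {e : E} :
    ∀ M, D.InDom M e →
      ∃ M', D.ProvidedIn M' e ∧ (M' = M ∨ Relation.TransGen (linkRel D) M' M) := by
  have hfin : Finite ↥D.nodes := D.finite_nodes
  have hwf : WellFounded
      (fun a b : ↥D.nodes => Relation.TransGen (linkRel D) a.1 b.1) := by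
    have htrans : IsTrans ↥D.nodes
        (fun a b : ↥D.nodes => Relation.TransGen (linkRel D) a.1 b.1) :=
      ⟨fun _ _ _ hab hbc => hab.trans hbc⟩
    have hirr : IsIrrefl ↥D.nodes
        (fun a b : ↥D.nodes => Relation.TransGen (linkRel D) a.1 b.1) := by
      refine ⟨fun a h => ?_⟩
      exact D.acyclic a.1 h
    exact Finite.wellFounded_of_trans_of_irrefl _
  intro M hM
  have hMn : M ∈ D.nodes := inDom_mem hM
  -- well-founded induction on the node
  suffices h : ∀ a : ↥D.nodes, D.InDom a.1 e →
      ∃ M', D.ProvidedIn M' e ∧ (M' = a.1 ∨ Relation.TransGen (linkRel D) M' a.1) from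
    h ⟨M, hMn⟩ hM
  intro a
  induction a using hwf.induction with
  | _ a ih =>
    intro ha
    by_cases hp : D.ProvidedIn a.1 e
    · exact ⟨a.1, hp, Or.inl rfl⟩
    · have : ∃ l ∈ D.links, l.tgt = a.1 ∧ e ∈ D.Dom l.src := by
        by_contra hcon
        push_neg at hcon
        exact hp ⟨ha, fun l hl htgt he => hcon l hl htgt he⟩
      obtain ⟨l, hl, htgt, he⟩ := this
      have hsrc : l.src ∈ D.nodes := D.src_mem _ hl
      have hrel : linkRel D l.src a.1 := ⟨l, hl, rfl, htgt⟩
      obtain ⟨M', hM', hrest⟩ :=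
        ih ⟨l.src, hsrc⟩ (Relation.TransGen.single hrel) he
      refine ⟨M', hM', Or.inr ?_⟩
      rcases hrest with rfl | htg
      · exact Relation.TransGen.single hrel
      · exact htg.tail hrel

lemma reaches_mono {D D' : DevGraph E} (hsub : D.links ⊆ D'.links)
    {M P : DGNode E} {τ : E → E} (h : D.Reaches M τ P) : D'.Reaches M τ P := by
  induction h with
  | refl P => exact DevGraph.Reaches.refl P
  | step hl _ ih => exact DevGraph.Reaches.step (hsub hl) ih

lemma transGen_head_link {D : DevGraph E} {A B : DGNode E}
    (h : Relation.TransGen (linkRel D) A B) : ∃ l ∈ D.links, l.src = A := by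
  induction h with
  | single h => obtain ⟨l, hl, hsrc, _⟩ := h; exact ⟨l, hl, hsrc⟩
  | tail _ _ ih => exact ih

end Aux

/-- The transitive enrichment of a structuring is again a structuring. -/
theorem transitive_enrichment_is_structuring {E : Type*} (kind : E → EKind)
    (D D' : DevGraph E) (loc : E → DGNode E) (Supp : E → Set E)
    (Sig Ax Lem : Set E) (K N : DGNode E) (σ : E → E)
    (hS : IsStructuring kind D loc Supp Sig Ax Lem)
    (hreach : D.Reaches K σ N)
    (hnodes : D'.nodes = D.nodes)
    (hlinks : D'.links = D.links ∪ {(⟨K, σ, N⟩ : DGLink E)}) :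
    IsStructuring kind D' loc Supp Sig Ax Lem := by
  classical
  have hsub : D.links ⊆ D'.links := by rw [hlinks]; exact Set.subset_union_left
  -- K ≠ N (otherwise the new link is a self-loop, contradicting acyclicity of D')
  have hKN : K ≠ N := by
    intro h
    subst h
    apply D'.acyclic K
    exact Relation.TransGen.single
      ⟨⟨K, σ, K⟩, by rw [hlinks]; exact Or.inr rfl, rfl, rfl⟩
  -- K forward-reaches N in D (strictly)
  have hKtoN : Relation.TransGen (linkRel D) K N := by
    rcases reaches_transGen hreach with h | h
    · exact absurd h hKN
    · exact h
  -- domains coincide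
  have hdom : ∀ M e, D'.InDom M e ↔ D.InDom M e := by
    intro M e
    constructor
    · intro h
      induction h with
      | loc hN hloc => exact DevGraph.InDom.loc (hnodes ▸ hN) hloc
      | @link l e hl _ ih =>
        rw [hlinks] at hl
        rcases hl with hl | hl
        · exact DevGraph.InDom.link hl ih
        · simp only [Set.mem_singleton_iff] at hl
          subst hl
          exact reach_dom hreach e ih
    · intro h
      induction h with
      | loc hN hloc => exact DevGraph.InDom.loc (hnodes ▸ hN) hloc
      | link hl _ ih => exact DevGraph.InDom.link (hsub hl) ih
  have hDom : ∀ M, D'.Dom M = D.Dom M := fun M => Set.ext fun e => hdom M e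
  have hDomAll : D'.DomAll = D.DomAll := by
    unfold DevGraph.DomAll
    rw [hnodes]
    exact Set.iUnion₂_congr fun M _ => hDom M
  -- reachability in D' implies reachability in D (with the same morphism)
  have hreach' : ∀ M τ P, D'.Reaches M τ P → D.Reaches M τ P := by
    intro M τ P h
    induction h with
    | refl P => exact DevGraph.Reaches.refl P
    | @step l σ'' P hl _ ih =>
      rw [hlinks] at hl
      rcases hl with hl | hl
      · exact DevGraph.Reaches.step hl ih
      · simp only [Set.mem_singleton_iff] at hl
        subst hl
        exact reaches_trans hreach ih
  -- roots coincide
  have hKnotroot : ∃ l ∈ D.links, l.src = K := transGen_head_link hKtoN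
  have hroot : ∀ M, D'.IsRoot M ↔ D.IsRoot M := by
    intro M
    constructor
    · rintro ⟨hm, hnol⟩
      exact ⟨hnodes ▸ hm, fun l hl => hnol l (hsub hl)⟩
    · rintro ⟨hm, hnol⟩
      refine ⟨hnodes ▸ hm, fun l hl => ?_⟩
      rw [hlinks] at hl
      rcases hl with hl | hl
      · exact hnol l hl
      · simp only [Set.mem_singleton_iff] at hl
        subst hl
        obtain ⟨l0, hl0, hsrc0⟩ := hKnotroot
        intro h
        simp only at h
        exact hnol l0 hl0 (hsrc0.trans h)
  have hDomRoots : D'.DomRoots = D.DomRoots := by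
    unfold DevGraph.DomRoots
    ext e
    simp only [Set.mem_setOf_eq]
    constructor
    · rintro ⟨M, hM, he⟩; exact ⟨M, (hroot M).1 hM, (hDom M ▸ he)⟩
    · rintro ⟨M, hM, he⟩; exact ⟨M, (hroot M).2 hM, (hDom M ▸ he)⟩
  -- providedness transfers from D to D'
  have hprov : ∀ e ∈ D.DomAll, D.ProvidedIn (loc e) e → D'.ProvidedIn (loc e) e := by
    rintro e heAll ⟨he, hnl⟩
    refine ⟨(hDom _) ▸ he, fun l hl htgt hesrc => ?_⟩
    rw [hlinks] at hl
    rcases hl with hl | hl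
    · exact hnl l hl htgt ((hDom l.src) ▸ hesrc)
    · simp only [Set.mem_singleton_iff] at hl
      subst hl
      -- new link into N with loc e = N; e ∈ Dom K would give a cycle
      have htgt' : N = loc e := htgt
      rw [hDom] at hesrc
      obtain ⟨M', hM', hrest⟩ := exists_provider K hesrc
      have hMeq : M' = loc e := hS.loc_map.unique e heAll M' hM'
      rw [hMeq, ← htgt'] at hrest
      rcases hrest with h | htg
      · exact hKN h.symm
      · exact D.acyclic N (htg.trans hKtoN)
  constructor
  · -- supp_for
    intro M hM
    have hM' : M ∈ D.nodes := hnodes ▸ hM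
    have hax : D'.axiomsOf kind M = D.axiomsOf kind M := by
      unfold DevGraph.axiomsOf; rw [hDom]
    have hlem : D'.lemmasOf kind M = D.lemmasOf kind M := by
      unfold DevGraph.lemmasOf; rw [hDom]
    rw [hax, hlem]
    exact hS.supp_for M hM'
  · -- loc_map
    refine ⟨?_, ?_, ?_, ?_⟩
    · intro M hM
      obtain ⟨e, he, hle⟩ := hS.loc_map.surj M (hnodes ▸ hM)
      exact ⟨e, hDomAll ▸ he, hle⟩
    · intro M hM e he
      exact hS.loc_map.local_loc M (hnodes ▸ hM) e he
    · intro e he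
      have he' : e ∈ D.DomAll := hDomAll ▸ he
      exact hprov e he' (hS.loc_map.provided e he')
    · intro e he M hM
      have he' : e ∈ D.DomAll := hDomAll ▸ he
      refine hS.loc_map.unique e he' M ⟨(hDom M) ▸ hM.1, fun l hl htgt => ?_⟩
      have := hM.2 l (hsub hl) htgt
      rw [hDom] at this
      exact this
  · rw [hDomRoots]; exact hS.roots_sig
  · rw [hDomRoots]; exact hS.roots_ax
  · rw [hDomRoots]; exact hS.roots_lem
  · intro φ hφ ψ hψ
    have hφ' : φ ∈ D.lemmasAll kind := by
      unfold DevGraph.lemmasAll at hφ ⊢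
      rwa [hDomAll] at hφ
    obtain ⟨τ, hτ, hτψ⟩ := hS.supp_reach φ hφ' ψ hψ
    exact ⟨τ, reaches_mono hsub hτ, hτψ⟩
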